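/- Let n ≥ 2, 0 < λ ≤ Λ < ∞, and α ∈ (0,1). Then for every pair of matrices A₁, A₂ ∈ 𝒜(λ,Λ) there exists Q ∈ O(n) such that trace{ J_α (A₁ + A₂ − 2 A₂^{1/2} Q A₁^{1/2}) } ≤ 2[ (n−1)Λ − ((1−α) + n(1−α)^{1/n}) λ ]; that is, the minimum over Q ∈ O(n) of this trace is at most 2[(n−1)Λ − ((1−α) + n(1−α)^{1/n})λ]. -/

import Mathlib

open MeasureTheory Matrix

noncomputable section

abbrev EucSp (n : ℕ) := EuclideanSpace ℝ (Fin n)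

/-- Principal square root of a positive semidefinite matrix (zero otherwise). -/
noncomputable def msqrt {n : ℕ} (A : Matrix (Fin n) (Fin n) ℝ) : Matrix (Fin n) (Fin n) ℝ :=
  open scoped Classical in
  if h : A.PosSemidef then
    (h.1.eigenvectorUnitary : Matrix (Fin n) (Fin n) ℝ) *
      diagonal ((RCLike.ofReal : ℝ → ℝ) ∘ Real.sqrt ∘ h.1.eigenvalues) *
      (star h.1.eigenvectorUnitary : Matrix (Fin n) (Fin n) ℝ)
  else 0

/-- `A ∈ 𝒜(λ,Λ)`: symmetric and uniformly elliptic. -/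
def UnifElliptic {n : ℕ} (lam Lam : ℝ) (A : Matrix (Fin n) (Fin n) ℝ) : Prop :=
  A.IsSymm ∧ ∀ ξ : Fin n → ℝ,
    lam * (ξ ⬝ᵥ ξ) ≤ ξ ⬝ᵥ A.mulVec ξ ∧ ξ ⬝ᵥ A.mulVec ξ ≤ Lam * (ξ ⬝ᵥ ξ)

/-- Membership in the orthogonal group `O(n)`. -/
def IsOrthMat {n : ℕ} (Q : Matrix (Fin n) (Fin n) ℝ) : Prop :=
  Q * Qᵀ = 1 ∧ Qᵀ * Q = 1

/-- Matrix acting on Euclidean space. -/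
noncomputable def mvE {n : ℕ} (M : Matrix (Fin n) (Fin n) ℝ) (y : EucSp n) : EucSp n :=
  (EuclideanSpace.equiv (Fin n) ℝ).symm (M.mulVec ((EuclideanSpace.equiv (Fin n) ℝ) y))

/-- The ellipsoid `x + ε A^{1/2} 𝔹`. -/
noncomputable def ellipsoid {n : ℕ} (ε : ℝ) (M : Matrix (Fin n) (Fin n) ℝ) (x : EucSp n) :
    Set (EucSp n) :=
  (fun y => x + ε • mvE (msqrt M) y) '' Metric.ball (0 : EucSp n) 1

/-- The matrix `J_α = diag(α-1, 1, …, 1)`. -/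
noncomputable def Jmat (n : ℕ) (α : ℝ) : Matrix (Fin n) (Fin n) ℝ :=
  Matrix.diagonal (fun i => if (i : ℕ) = 0 then α - 1 else 1)

/-- Reflection in the first coordinate axis. -/
noncomputable def J0 (n : ℕ) : Matrix (Fin n) (Fin n) ℝ :=
  Matrix.diagonal (fun i => if (i : ℕ) = 0 then -1 else 1)

/-- The first standard basis vector `e₁`. -/
noncomputable def e1 (n : ℕ) : EucSp n :=
  (EuclideanSpace.equiv (Fin n) ℝ).symm (fun i => if (i : ℕ) = 0 then 1 else 0)

/-- `f₁(x,z) = C|x-z|^α + C̃|x+z|²`. -/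
noncomputable def f1 {n : ℕ} (α C Ct : ℝ) (x z : EucSp n) : ℝ :=
  C * ‖x - z‖ ^ α + Ct * ‖x + z‖ ^ 2

/-- The annular step function `f₂`. -/
noncomputable def f2 {n : ℕ} (α C lam ε : ℝ) (N : ℕ) (x z : EucSp n) : ℝ :=
  if ‖x - z‖ / (Real.sqrt lam * ε) > (N : ℝ) then 0
  else C ^ (2 * (2 * N - ⌈2 * ‖x - z‖ / (Real.sqrt lam * ε)⌉₊)) * ε ^ α

namespace Stmt6Aux

lemma msqrt_mul_self {n : ℕ} {A : Matrix (Fin n) (Fin n) ℝ} (h : A.PosSemidef) :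
    msqrt A * msqrt A = A := by
  classical
  unfold msqrt
  rw [dif_pos h]
  set U := h.1.eigenvectorUnitary
  have hU : (star U : Matrix (Fin n) (Fin n) ℝ) * U = 1 := Unitary.star_mul_self_of_mem U.2
  have hD : diagonal ((RCLike.ofReal : ℝ → ℝ) ∘ Real.sqrt ∘ h.1.eigenvalues) *
      diagonal ((RCLike.ofReal : ℝ → ℝ) ∘ Real.sqrt ∘ h.1.eigenvalues)
      = diagonal ((RCLike.ofReal : ℝ → ℝ) ∘ h.1.eigenvalues) := by
    rw [diagonal_mul_diagonal]
    congr 1; funext i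
    simp [Real.mul_self_sqrt (h.eigenvalues_nonneg i)]
  conv_rhs => rw [h.1.spectral_theorem]
  rw [Unitary.conjStarAlgAut_apply]
  calc _ = (U : Matrix (Fin n) (Fin n) ℝ) * diagonal ((RCLike.ofReal : ℝ → ℝ) ∘ Real.sqrt ∘ h.1.eigenvalues) *
      ((star U : Matrix (Fin n) (Fin n) ℝ) * U) * diagonal ((RCLike.ofReal : ℝ → ℝ) ∘ Real.sqrt ∘ h.1.eigenvalues) * (star U : Matrix (Fin n) (Fin n) ℝ) := by
        simp only [Matrix.mul_assoc]
    _ = _ := by rw [hU, Matrix.mul_one, Matrix.mul_assoc (U : Matrix (Fin n) (Fin n) ℝ), hD]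

lemma msqrt_posSemidef {n : ℕ} {A : Matrix (Fin n) (Fin n) ℝ} (h : A.PosSemidef) :
    (msqrt A).PosSemidef := by
  classical
  unfold msqrt
  rw [dif_pos h]
  have hd : (diagonal ((RCLike.ofReal : ℝ → ℝ) ∘ Real.sqrt ∘ h.1.eigenvalues)).PosSemidef := by
    rw [posSemidef_diagonal_iff]
    intro i; simp [Real.sqrt_nonneg]
  have := hd.mul_mul_conjTranspose_same (h.1.eigenvectorUnitary : Matrix (Fin n) (Fin n) ℝ)
  simpa [Matrix.star_eq_conjTranspose] using this


lemma dot_self_pos {n : ℕ} {x : Fin n → ℝ} (hx : x ≠ 0) : 0 < x ⬝ᵥ x := by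
  rcases Function.ne_iff.mp hx with ⟨i, hi⟩
  have hi' : (0:ℝ) < x i * x i := mul_self_pos.mpr hi
  have hle : x i * x i ≤ x ⬝ᵥ x :=
    Finset.single_le_sum (fun j _ => mul_self_nonneg (x j)) (Finset.mem_univ i)
  linarith

lemma isHermitian_of_elliptic {n : ℕ} {lam Lam : ℝ} {A : Matrix (Fin n) (Fin n) ℝ}
    (hA : UnifElliptic lam Lam A) : A.IsHermitian := by
  rw [Matrix.IsHermitian, Matrix.conjTranspose_eq_transpose_of_trivial]
  exact hA.1

lemma posDef_of_elliptic {n : ℕ} {lam Lam : ℝ} (hlam : 0 < lam) {A : Matrix (Fin n) (Fin n) ℝ}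
    (hA : UnifElliptic lam Lam A) : A.PosDef := by
  rw [posDef_iff_dotProduct_mulVec]
  refine ⟨isHermitian_of_elliptic hA, fun x hx => ?_⟩
  have h1 := (hA.2 x).1
  have hxx : 0 < x ⬝ᵥ x := dot_self_pos hx
  have : (0:ℝ) < lam * (x ⬝ᵥ x) := mul_pos hlam hxx
  simpa [star_trivial] using lt_of_lt_of_le this h1

lemma eig_ge {n : ℕ} {lam Lam : ℝ} {A : Matrix (Fin n) (Fin n) ℝ}
    (hA : UnifElliptic lam Lam A) (hH : A.IsHermitian) (i : Fin n) :
    lam ≤ hH.eigenvalues i := by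
  have hv : (⇑(hH.eigenvectorBasis i) : Fin n → ℝ) ⬝ᵥ ⇑(hH.eigenvectorBasis i) = 1 := by
    have h := hH.eigenvectorBasis.orthonormal.1 i
    have h2 : (inner ℝ (hH.eigenvectorBasis i) (hH.eigenvectorBasis i) : ℝ) = 1 := by
      rw [real_inner_self_eq_norm_mul_norm, h]; ring
    rw [← h2, PiLp.inner_apply]
    simp [dotProduct, sq]
  have he : hH.eigenvalues i
      = (⇑(hH.eigenvectorBasis i) : Fin n → ℝ) ⬝ᵥ (A *ᵥ ⇑(hH.eigenvectorBasis i)) := by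
    rw [hH.eigenvalues_eq]; simp
  have := (hA.2 (⇑(hH.eigenvectorBasis i))).1
  rw [hv, mul_one] at this
  rw [he]; exact this

/-- trace of a real hermitian matrix is the sum of eigenvalues. -/
lemma trace_eq_sum {n : ℕ} {A : Matrix (Fin n) (Fin n) ℝ} (hA : A.IsHermitian) :
    A.trace = ∑ i, hA.eigenvalues i := by
  simpa using hA.trace_eq_sum_eigenvalues

lemma det_eq_prod {n : ℕ} {A : Matrix (Fin n) (Fin n) ℝ} (hA : A.IsHermitian) :
    A.det = ∏ i, hA.eigenvalues i := by
  rw [hA.det_eq_prod_eigenvalues]; norm_num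

/-- determinant lower bound for elliptic matrices. -/
lemma det_ge {n : ℕ} {lam Lam : ℝ} (hlam : 0 < lam) {A : Matrix (Fin n) (Fin n) ℝ}
    (hA : UnifElliptic lam Lam A) : lam ^ n ≤ A.det := by
  have hH := isHermitian_of_elliptic hA
  rw [det_eq_prod hH]
  calc lam ^ n = ∏ _i : Fin n, lam := by simp
    _ ≤ ∏ i, hH.eigenvalues i :=
      Finset.prod_le_prod (fun i _ => hlam.le) (fun i _ => eig_ge hA hH i)

/-- AM-GM: trace ≥ n * det^{1/n} for PSD matrices. -/
lemma trace_ge_det_rpow {n : ℕ} (hn : n ≠ 0) {S : Matrix (Fin n) (Fin n) ℝ}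
    (hS : S.PosSemidef) : (n : ℝ) * S.det ^ ((1:ℝ)/n) ≤ S.trace := by
  have hH := hS.1
  have hnn : ∀ i : Fin n, 0 ≤ hH.eigenvalues i := fun i => hS.eigenvalues_nonneg i
  have hnpos : (0:ℝ) < n := by positivity
  have key : S.det ^ ((1:ℝ)/n) ≤ (1/n) * S.trace := by
    rw [det_eq_prod hH, trace_eq_sum hH]
    have h1 : (∏ i, hH.eigenvalues i) ^ ((1:ℝ)/n)
        = ∏ i : Fin n, hH.eigenvalues i ^ ((1:ℝ)/n) := by
      rw [← Real.finset_prod_rpow _ _ (fun i _ => hnn i)]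
    rw [h1, Finset.mul_sum]
    have := Real.geom_mean_le_arith_mean_weighted Finset.univ
      (fun _ : Fin n => (1:ℝ)/n) hH.eigenvalues
      (fun i _ => by positivity) (by simp; field_simp) (fun i _ => hnn i)
    exact this
  calc (n:ℝ) * S.det ^ ((1:ℝ)/n) ≤ (n:ℝ) * ((1/n) * S.trace) := by
        exact mul_le_mul_of_nonneg_left key hnpos.le
    _ = S.trace := by field_simp

lemma sum_ite_fin {n : ℕ} (hn : 0 < n) (f : Fin n → ℝ) (a b : ℝ)
    (h0 : ∀ i : Fin n, (i:ℕ) = 0 → f i ≤ a) (h1 : ∀ i : Fin n, (i:ℕ) ≠ 0 → f i ≤ b) :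
    ∑ i, f i ≤ a + ((n:ℝ) - 1) * b := by
  haveI : NeZero n := ⟨hn.ne'⟩
  rw [← Finset.add_sum_erase _ f (Finset.mem_univ (0 : Fin n))]
  have hcard : ((Finset.univ.erase (0 : Fin n)).card : ℝ) = (n:ℝ) - 1 := by
    rw [Finset.card_erase_of_mem (Finset.mem_univ _)]
    simp [Nat.cast_sub hn]
  have hsum : ∑ i ∈ Finset.univ.erase (0 : Fin n), f i
      ≤ ∑ _i ∈ Finset.univ.erase (0 : Fin n), b := by
    refine Finset.sum_le_sum fun i hi => h1 i ?_
    have := Finset.ne_of_mem_erase hi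
    exact fun h => this (Fin.ext (by simp [h]))
  have ha := h0 0 (by simp)
  calc f 0 + ∑ i ∈ Finset.univ.erase (0 : Fin n), f i
      ≤ a + ∑ _i ∈ Finset.univ.erase (0 : Fin n), b := add_le_add ha hsum
    _ = a + ((n:ℝ)-1) * b := by rw [Finset.sum_const, nsmul_eq_mul, hcard]

lemma diag_bounds {n : ℕ} {lam Lam : ℝ} {A : Matrix (Fin n) (Fin n) ℝ}
    (hA : UnifElliptic lam Lam A) (i : Fin n) : lam ≤ A i i ∧ A i i ≤ Lam := by
  have h := hA.2 (Pi.single i 1)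
  have h1 : (Pi.single i 1 : Fin n → ℝ) ⬝ᵥ Pi.single i 1 = 1 := by simp
  have h2 : (Pi.single i 1 : Fin n → ℝ) ⬝ᵥ (A *ᵥ Pi.single i 1) = A i i := by
    simp [Matrix.mulVec_single, single_dotProduct]
  rw [h1, h2, mul_one, mul_one] at h
  exact h

lemma det_Jmat {n : ℕ} (hn : 0 < n) (α : ℝ) : (Jmat n α).det = α - 1 := by
  haveI : NeZero n := ⟨hn.ne'⟩
  rw [Jmat, Matrix.det_diagonal]
  rw [Finset.prod_eq_single (0 : Fin n)]
  · simp
  · intro i _ hi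
    have : (i:ℕ) ≠ 0 := fun h => hi (Fin.ext (by simp [h]))
    simp [this]
  · simp

lemma trace_Jmat_mul_le {n : ℕ} (hn : 0 < n) {lam Lam α : ℝ} (hlam : 0 < lam)
    (hα : α < 1) {A : Matrix (Fin n) (Fin n) ℝ} (hA : UnifElliptic lam Lam A) :
    (Jmat n α * A).trace ≤ (α - 1) * lam + ((n:ℝ) - 1) * Lam := by
  have htr : (Jmat n α * A).trace
      = ∑ i : Fin n, (if (i:ℕ) = 0 then α - 1 else 1) * A i i := by
    simp [Jmat, Matrix.trace, Matrix.diag, Matrix.diagonal_mul]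
  rw [htr]
  refine sum_ite_fin hn _ _ _ (fun i hi => ?_) (fun i hi => ?_)
  · rw [if_pos hi]
    have := (diag_bounds hA i).1
    nlinarith
  · rw [if_neg hi, one_mul]
    exact (diag_bounds hA i).2

end Stmt6Aux

set_option maxHeartbeats 2000000 in
open Stmt6Aux in
/-- the minimal coupling trace estimate (Lemma 4.6). -/
theorem stmt6 {n : ℕ} (hn : 2 ≤ n)
    (lam Lam : ℝ) (hlam : 0 < lam) (hlL : lam ≤ Lam)
    (α : ℝ) (hα : α ∈ Set.Ioo (0 : ℝ) 1) :
    ∀ A1 A2 : Matrix (Fin n) (Fin n) ℝ,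
      UnifElliptic lam Lam A1 → UnifElliptic lam Lam A2 →
      ∃ Q, IsOrthMat Q ∧
        Matrix.trace (Jmat n α * (A1 + A2 - (2 : ℝ) • (msqrt A2 * Q * msqrt A1))) ≤
          2 * (((n : ℝ) - 1) * Lam -
            ((1 - α) + (n : ℝ) * (1 - α) ^ ((1 : ℝ) / n)) * lam) := by
  intro A1 A2 hA1 hA2
  have hn0 : 0 < n := by omega
  have hnne : n ≠ 0 := hn0.ne'
  have hαlt : α < 1 := hα.2
  -- positive definiteness, square roots
  have hP1 : A1.PosDef := posDef_of_elliptic hlam hA1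
  have hP2 : A2.PosDef := posDef_of_elliptic hlam hA2
  set B1 := msqrt A1 with hB1def
  set B2 := msqrt A2 with hB2def
  have hB1 : B1 = msqrt A1 := hB1def
  have hB2 : B2 = msqrt A2 := hB2def
  have hB1sq : B1 * B1 = A1 := by rw [hB1]; exact msqrt_mul_self hP1.posSemidef
  have hB2sq : B2 * B2 = A2 := by rw [hB2]; exact msqrt_mul_self hP2.posSemidef
  have hB1psd : B1.PosSemidef := by rw [hB1]; exact msqrt_posSemidef hP1.posSemidef
  have hB2psd : B2.PosSemidef := by rw [hB2]; exact msqrt_posSemidef hP2.posSemidef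
  clear_value B1 B2
  clear hB1 hB2
  -- determinants of the square roots
  have hdetA1 : lam ^ n ≤ A1.det := det_ge hlam hA1
  have hdetA2 : lam ^ n ≤ A2.det := det_ge hlam hA2
  have hdetA1pos : 0 < A1.det := hP1.det_pos
  have hdetA2pos : 0 < A2.det := hP2.det_pos
  have hdetB1nn : 0 ≤ B1.det := by
    rw [det_eq_prod hB1psd.1]
    exact Finset.prod_nonneg fun i _ => hB1psd.eigenvalues_nonneg i
  have hdetB2nn : 0 ≤ B2.det := by
    rw [det_eq_prod hB2psd.1]
    exact Finset.prod_nonneg fun i _ => hB2psd.eigenvalues_nonneg i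
  have hdetB1sq : B1.det * B1.det = A1.det := by rw [← Matrix.det_mul, hB1sq]
  have hdetB2sq : B2.det * B2.det = A2.det := by rw [← Matrix.det_mul, hB2sq]
  have hdetB1pos : 0 < B1.det := by nlinarith
  have hdetB2pos : 0 < B2.det := by nlinarith
  -- the matrix M and its polar decomposition
  set J := Jmat n α with hJdef
  have hdetJ : J.det = α - 1 := det_Jmat hn0 α
  set M := B1 * J * B2 with hMdef
  have hdetM : M.det = B1.det * (α - 1) * B2.det := by
    rw [hMdef, Matrix.det_mul, Matrix.det_mul, hdetJ]
  have hdetMne : M.det ≠ 0 := by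
    rw [hdetM]
    have : α - 1 ≠ 0 := by linarith
    positivity
  have hMunit : IsUnit M.det := isUnit_iff_ne_zero.mpr hdetMne
  have hMTunit : IsUnit Mᵀ.det := by rwa [Matrix.det_transpose]
  -- P = Mᵀ M is PSD, S its square root
  set P := Mᵀ * M with hPdef
  have hPpsd : P.PosSemidef := by
    have := Matrix.posSemidef_conjTranspose_mul_self M
    rwa [Matrix.conjTranspose_eq_transpose_of_trivial] at this
  obtain ⟨S, hSpsd, hSsq⟩ : ∃ S : Matrix (Fin n) (Fin n) ℝ, S.PosSemidef ∧ S * S = P :=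
    ⟨msqrt P, msqrt_posSemidef hPpsd, msqrt_mul_self hPpsd⟩
  have hST : Sᵀ = S := by
    have := hSpsd.1
    rwa [Matrix.IsHermitian, Matrix.conjTranspose_eq_transpose_of_trivial] at this
  have hdetSnn : 0 ≤ S.det := by
    rw [det_eq_prod hSpsd.1]
    exact Finset.prod_nonneg fun i _ => hSpsd.eigenvalues_nonneg i
  have hdetSsq : S.det * S.det = M.det * M.det := by
    rw [← Matrix.det_mul, hSsq, hPdef, Matrix.det_mul, Matrix.det_transpose]
  have hdetMabs : M.det = -(B1.det * B2.det * (1 - α)) := by rw [hdetM]; ring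
  have hdetS : S.det = B1.det * B2.det * (1 - α) := by
    have hpos : 0 ≤ B1.det * B2.det * (1 - α) := by
      have : (0:ℝ) ≤ 1 - α := by linarith
      positivity
    nlinarith [hdetSsq, hdetMabs]
  have hSunit : IsUnit S.det := by
    rw [hdetS]
    refine isUnit_iff_ne_zero.mpr ?_
    have h1α : (0:ℝ) < 1 - α := by linarith
    positivity
  -- the orthogonal matrix Q
  refine ⟨S * M⁻¹, ⟨?_, ?_⟩, ?_⟩
  · -- Q Qᵀ = 1
    have : (S * M⁻¹) * (S * M⁻¹)ᵀ = S * (M⁻¹ * (Mᵀ)⁻¹) * S := by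
      rw [Matrix.transpose_mul, ← Matrix.transpose_nonsing_inv, hST]
      noncomm_ring
    rw [this, ← Matrix.mul_inv_rev, ← hPdef, ← hSsq, Matrix.mul_inv_rev]
    calc S * (S⁻¹ * S⁻¹) * S = (S * S⁻¹) * (S⁻¹ * S) := by noncomm_ring
      _ = 1 := by rw [Matrix.mul_nonsing_inv _ hSunit, Matrix.nonsing_inv_mul _ hSunit, one_mul]
  · -- Qᵀ Q = 1
    have h1 : (S * M⁻¹)ᵀ * (S * M⁻¹) = (Mᵀ)⁻¹ * (S * S) * M⁻¹ := by
      rw [Matrix.transpose_mul, ← Matrix.transpose_nonsing_inv, hST]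
      noncomm_ring
    rw [h1, hSsq, hPdef]
    calc (Mᵀ)⁻¹ * (Mᵀ * M) * M⁻¹ = ((Mᵀ)⁻¹ * Mᵀ) * (M * M⁻¹) := by noncomm_ring
      _ = 1 := by rw [Matrix.nonsing_inv_mul _ hMTunit, Matrix.mul_nonsing_inv _ hMunit, one_mul]
  · -- the trace bound
    have htrQ : (J * (B2 * (S * M⁻¹) * B1)).trace = S.trace := by
      have h1 : J * (B2 * (S * M⁻¹) * B1) = (J * B2) * ((S * M⁻¹) * B1) := by noncomm_ring
      have h2 : ((S * M⁻¹) * B1) * (J * B2) = S * (M⁻¹ * M) := by rw [hMdef]; noncomm_ring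
      rw [h1, Matrix.trace_mul_comm, h2, Matrix.nonsing_inv_mul _ hMunit, Matrix.mul_one]
    -- lower bound on trace S
    have hdetSge : lam ^ n * (1 - α) ≤ S.det := by
      rw [hdetS]
      have h1α : (0:ℝ) < 1 - α := by linarith
      have : lam ^ n ≤ B1.det * B2.det := by nlinarith [pow_pos hlam n]
      nlinarith
    have htrSge : (n:ℝ) * (lam * (1 - α) ^ ((1:ℝ)/n)) ≤ S.trace := by
      have h1 := trace_ge_det_rpow hnne hSpsd
      have h1α : (0:ℝ) ≤ 1 - α := by linarith
      have h2 : (lam ^ n * (1 - α)) ^ ((1:ℝ)/n) ≤ S.det ^ ((1:ℝ)/n) := by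
        apply Real.rpow_le_rpow (by positivity) hdetSge (by positivity)
      have h3 : (lam ^ n * (1 - α)) ^ ((1:ℝ)/n) = lam * (1 - α) ^ ((1:ℝ)/n) := by
        rw [Real.mul_rpow (by positivity) h1α, one_div,
          Real.pow_rpow_inv_natCast hlam.le hnne]
      have h4 : (n:ℝ) * (lam * (1 - α) ^ ((1:ℝ)/n)) ≤ (n:ℝ) * S.det ^ ((1:ℝ)/n) := by
        rw [← h3]
        exact mul_le_mul_of_nonneg_left h2 (by positivity)
      linarith
    -- upper bounds on traces
    have htA1 := trace_Jmat_mul_le hn0 hlam hαlt hA1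
    have htA2 := trace_Jmat_mul_le hn0 hlam hαlt hA2
    -- expand the trace
    have hexp : (J * (A1 + A2 - (2:ℝ) • (B2 * (S * M⁻¹) * B1))).trace
        = (J * A1).trace + (J * A2).trace - 2 * (J * (B2 * (S * M⁻¹) * B1)).trace := by
      rw [Matrix.mul_sub, Matrix.mul_add, Matrix.trace_sub, Matrix.trace_add,
        Matrix.mul_smul, Matrix.trace_smul]
      simp
    rw [hexp, htrQ]
    have := htrSge
    nlinarith

end
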